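/- The alternating product of two concatenation-closed languages is concatenation-closed. -/

import Mathlib

def pairWord {A : Type*} (u v : List A) : List (Option A) :=
  u.map some ++ none :: v.map some

/-- `L ⊆ A* # A*` is concatenation-closed if
`u₁ # v₁, u₂ # v₂ ∈ L` imply `u₁u₂ # v₂v₁ ∈ L`. -/
def ConcatClosed {A : Type*} (L : Set (List (Option A))) : Prop :=
  ∀ u₁ v₁ u₂ v₂ : List A, pairWord u₁ v₁ ∈ L → pairWord u₂ v₂ ∈ L →
    pairWord (u₁ ++ u₂) (v₂ ++ v₁) ∈ L

def AltProd {A : Type*} (L₁ L₂ : Set (List (Option A))) : Set (List (Option A)) :=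
  { w | ∃ (k : ℕ) (u v : ℕ → List A) (X : ℕ → Bool),
      (∀ n, X (n + 1) = !X n) ∧
      (∀ i < k, pairWord (u i) (v i) ∈ (if X i then L₁ else L₂)) ∧
      w = pairWord (((List.range k).map u).flatten)
            (((List.range k).reverse.map v).flatten) }

/- Auxiliary material -/

private def Fl {A : Type*} (k : ℕ) (u : ℕ → List A) : List A :=
  ((List.range k).map u).flatten

private def Gl {A : Type*} (k : ℕ) (v : ℕ → List A) : List A :=
  ((List.range k).reverse.map v).flatten

private lemma Fl_succ {A : Type*} (k : ℕ) (u : ℕ → List A) :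
    Fl (k + 1) u = Fl k u ++ u k := by
  simp [Fl, List.range_succ]

private lemma Gl_succ {A : Type*} (k : ℕ) (v : ℕ → List A) :
    Gl (k + 1) v = v k ++ Gl k v := by
  simp [Gl, List.range_succ]

private lemma Fl_congr {A : Type*} (k : ℕ) {u u' : ℕ → List A}
    (h : ∀ i < k, u i = u' i) : Fl k u = Fl k u' := by
  unfold Fl
  congr 1
  exact List.map_congr_left (fun i hi => h i (List.mem_range.mp hi))

private lemma Gl_congr {A : Type*} (k : ℕ) {v v' : ℕ → List A}
    (h : ∀ i < k, v i = v' i) : Gl k v = Gl k v' := by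
  unfold Gl
  congr 1
  refine List.map_congr_left (fun i hi => h i ?_)
  rw [List.mem_reverse, List.mem_range] at hi
  exact hi

private def flipSeq (c : Bool) : ℕ → Bool
  | 0 => c
  | n + 1 => !(flipSeq c n)

private lemma pairWord_inj {A : Type*} {u v u' v' : List A}
    (h : pairWord u v = pairWord u' v') : u = u' ∧ v = v' := by
  induction u generalizing u' with
  | nil =>
    cases u' with
    | nil =>
      simp only [pairWord, List.map_nil, List.nil_append, List.cons.injEq, true_and] at h
      exact ⟨rfl, List.map_injective_iff.mpr (Option.some_injective A) h⟩
    | cons a u' => simp [pairWord] at h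
  | cons a u ih =>
    cases u' with
    | nil => simp [pairWord] at h
    | cons a' u' =>
      simp only [pairWord, List.map_cons, List.cons_append, List.cons.injEq,
        Option.some.injEq] at h
      obtain ⟨ha, h⟩ := h
      obtain ⟨hu, hv⟩ := ih (u' := u') (by simpa [pairWord] using h)
      exact ⟨by rw [ha, hu], hv⟩

private lemma append_block {A : Type*} {L₁ L₂ : Set (List (Option A))}
    (h₁ : ConcatClosed L₁) (h₂ : ConcatClosed L₂)
    (k : ℕ) (u v : ℕ → List A) (X : ℕ → Bool)
    (hX : ∀ n, X (n + 1) = !X n)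
    (hb : ∀ i < k, pairWord (u i) (v i) ∈ (if X i then L₁ else L₂))
    (a b : List A) (c : Bool)
    (hab : pairWord a b ∈ (if c then L₁ else L₂)) :
    ∃ (k' : ℕ) (u' v' : ℕ → List A) (X' : ℕ → Bool),
      (∀ n, X' (n + 1) = !X' n) ∧
      (∀ i < k', pairWord (u' i) (v' i) ∈ (if X' i then L₁ else L₂)) ∧
      Fl k' u' = Fl k u ++ a ∧ Gl k' v' = b ++ Gl k v := by
  rcases k with _ | m
  · -- no previous blocks: single block, alternating sequence starting at c
    refine ⟨1, fun _ => a, fun _ => b, flipSeq c, fun n => rfl, ?_, ?_, ?_⟩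
    · intro i hi
      interval_cases i
      exact hab
    · simp [Fl, List.range_succ]
    · simp [Gl, List.range_succ]
  · by_cases hc : c = X m
    · -- merge the new block with the last block
      refine ⟨m + 1, fun i => if i = m then u m ++ a else u i,
        fun i => if i = m then b ++ v m else v i, X, hX, ?_, ?_, ?_⟩
      · intro i hi
        by_cases him : i = m
        · simp only [him, if_pos rfl]
          have hm := hb m (Nat.lt_succ_self m)
          rw [hc] at hab
          cases hXm : X m <;> rw [hXm] at hm hab <;> simp only [if_true, if_false] at hm hab ⊢
          · exact h₂ _ _ _ _ hm hab
          · exact h₁ _ _ _ _ hm hab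
        · simpa [him] using hb i hi
      · have hcg : Fl m (fun i => if i = m then u m ++ a else u i) = Fl m u :=
          Fl_congr m (fun i hi => by simp [Nat.ne_of_lt hi])
        rw [Fl_succ, Fl_succ, if_pos rfl, hcg, List.append_assoc]
      · have hcg : Gl m (fun i => if i = m then b ++ v m else v i) = Gl m v :=
          Gl_congr m (fun i hi => by simp [Nat.ne_of_lt hi])
        rw [Gl_succ, Gl_succ, if_pos rfl, hcg, List.append_assoc]
    · -- the new block continues the alternation: c = !(X m) = X (m+1)
      have hcm : c = X (m + 1) := by
        rw [hX m]
        cases hXm : X m <;> rw [hXm] at hc <;> simp_all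
      refine ⟨m + 2, fun i => if i = m + 1 then a else u i,
        fun i => if i = m + 1 then b else v i, X, hX, ?_, ?_, ?_⟩
      · intro i hi
        by_cases him : i = m + 1
        · subst him
          simpa [hcm] using hab
        · simpa [him] using hb i (by omega)
      · have hcg : Fl (m + 1) (fun i => if i = m + 1 then a else u i) = Fl (m + 1) u :=
          Fl_congr (m + 1) (fun i hi => by simp [Nat.ne_of_lt hi])
        rw [Fl_succ, if_pos rfl, hcg]
      · have hcg : Gl (m + 1) (fun i => if i = m + 1 then b else v i) = Gl (m + 1) v :=
          Gl_congr (m + 1) (fun i hi => by simp [Nat.ne_of_lt hi])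
        rw [Gl_succ, if_pos rfl, hcg]

private lemma combine {A : Type*} {L₁ L₂ : Set (List (Option A))}
    (h₁ : ConcatClosed L₁) (h₂ : ConcatClosed L₂) :
    ∀ (k₂ : ℕ) (u₂ v₂ : ℕ → List A) (X₂ : ℕ → Bool),
      (∀ n, X₂ (n + 1) = !X₂ n) →
      (∀ i < k₂, pairWord (u₂ i) (v₂ i) ∈ (if X₂ i then L₁ else L₂)) →
    ∀ (k₁ : ℕ) (u₁ v₁ : ℕ → List A) (X₁ : ℕ → Bool),
      (∀ n, X₁ (n + 1) = !X₁ n) →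
      (∀ i < k₁, pairWord (u₁ i) (v₁ i) ∈ (if X₁ i then L₁ else L₂)) →
    ∃ (k : ℕ) (u v : ℕ → List A) (X : ℕ → Bool),
      (∀ n, X (n + 1) = !X n) ∧
      (∀ i < k, pairWord (u i) (v i) ∈ (if X i then L₁ else L₂)) ∧
      Fl k u = Fl k₁ u₁ ++ Fl k₂ u₂ ∧ Gl k v = Gl k₂ v₂ ++ Gl k₁ v₁ := by
  intro k₂
  induction k₂ with
  | zero =>
    intro u₂ v₂ X₂ _ _ k₁ u₁ v₁ X₁ hX₁ hb₁
    exact ⟨k₁, u₁, v₁, X₁, hX₁, hb₁, by simp [Fl], by simp [Gl]⟩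
  | succ p ih =>
    intro u₂ v₂ X₂ hX₂ hb₂ k₁ u₁ v₁ X₁ hX₁ hb₁
    obtain ⟨k, u, v, X, hX, hb, hFu, hGv⟩ :=
      ih u₂ v₂ X₂ hX₂ (fun i hi => hb₂ i (by omega)) k₁ u₁ v₁ X₁ hX₁ hb₁
    obtain ⟨k', u', v', X', hX', hb', hFu', hGv'⟩ :=
      append_block h₁ h₂ k u v X hX hb (u₂ p) (v₂ p) (X₂ p)
        (hb₂ p (Nat.lt_succ_self p))
    refine ⟨k', u', v', X', hX', hb', ?_, ?_⟩
    · rw [hFu', hFu, Fl_succ, List.append_assoc]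
    · rw [hGv', hGv, Gl_succ, List.append_assoc]

/-- The alternating product of concatenation-closed languages is
concatenation-closed. -/
theorem altProd_concatClosed {A : Type*} (L₁ L₂ : Set (List (Option A)))
    (h₁ : ConcatClosed L₁) (h₂ : ConcatClosed L₂) :
    ConcatClosed (AltProd L₁ L₂) := by
  intro u₁ v₁ u₂ v₂ hm₁ hm₂
  obtain ⟨k₁, U₁, V₁, X₁, hX₁, hb₁, he₁⟩ := hm₁
  obtain ⟨k₂, U₂, V₂, X₂, hX₂, hb₂, he₂⟩ := hm₂
  obtain ⟨hu₁, hv₁⟩ := pairWord_inj he₁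
  obtain ⟨hu₂, hv₂⟩ := pairWord_inj he₂
  obtain ⟨k, u, v, X, hX, hb, hFu, hGv⟩ :=
    combine h₁ h₂ k₂ U₂ V₂ X₂ hX₂ hb₂ k₁ U₁ V₁ X₁ hX₁ hb₁
  refine ⟨k, u, v, X, hX, hb, ?_⟩
  have : u₁ ++ u₂ = Fl k u := by rw [hFu, hu₁, hu₂]; rfl
  have hv : v₂ ++ v₁ = Gl k v := by rw [hGv, hv₁, hv₂]; rfl
  rw [this, hv]; rfl
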